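/- Let x, z be vertices of DL_d(q) with h_i(z) = 0 for all i. If m_i(z) ≤ m_i(x) for every i, then d(x,z) ≤ d(x,id). -/
import Mathlib


open Finset

/-- A vertex of the oriented (q+1)-valent tree `T` underlying Diestel–Leader graphs:
descend `m` edges from the basepoint `o` along its ancestor ray (whose edges all
carry the label `0`), then ascend along the edge labels listed in `w`.
The normalization condition (if `m ≠ 0`, the first label of `w` is not `0`)
makes this representation unique. -/
structure TreeVertex (q : ℕ) where
  m : ℕ
  w : List (Fin q)
  norm : ∀ a t, m ≠ 0 → w = a :: t → (a : ℕ) ≠ 0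

namespace TreeVertex

variable {q : ℕ}

/-- the basepoint `o` of the tree -/
def o (q : ℕ) : TreeVertex q := ⟨0, [], fun _ _ h _ => absurd rfl h⟩

/-- `l v = d(v, o ⋏ v)` -/
def l (v : TreeVertex q) : ℕ := v.w.length

/-- the height function `h = l - m` -/
def h (v : TreeVertex q) : ℤ := (v.l : ℤ) - (v.m : ℤ)

/-- length of the longest common prefix of two lists -/
def cpl : List (Fin q) → List (Fin q) → ℕ
  | a :: s, b :: t => if a = b then cpl s t + 1 else 0
  | _, _ => 0

/-- `mPair x y = d(x, x ⋏ y)`, the distance from `x` to the greatest common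
ancestor of `x` and `y`. -/
def mPair (x y : TreeVertex q) : ℕ :=
  if x.m < y.m then x.l + (y.m - x.m)
  else if y.m < x.m then x.l
  else x.l - cpl x.w y.w

/-- the graph distance in the tree -/
def dist (x y : TreeVertex q) : ℕ := mPair x y + mPair y x

end TreeVertex

/-- The Diestel–Leader graph `DL_d(q)`: `d`-tuples of tree vertices whose heights
sum to `0`. -/
structure DL (d q : ℕ) where
  t : Fin d → TreeVertex q
  hsum : ∑ i, (t i).h = 0

namespace DL

variable {d q : ℕ}

/-- the basepoint `id` of `DL_d(q)` -/
def id0 (d q : ℕ) : DL d q :=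
  ⟨fun _ => TreeVertex.o q, by simp [TreeVertex.h, TreeVertex.o, TreeVertex.l]⟩

/-- the pairwise coordinate `m_i(x,y) = d_i(p_i x, p_i x ⋏ p_i y)` -/
def mm (x y : DL d q) (i : Fin d) : ℕ := TreeVertex.mPair (x.t i) (y.t i)

/-- the pairwise coordinate `l_i(x,y) = d_i(p_i y, p_i x ⋏ p_i y)` -/
def ll (x y : DL d q) (i : Fin d) : ℕ := TreeVertex.mPair (y.t i) (x.t i)

/-- the coordinate `m_i(x)` -/
def mc (x : DL d q) (i : Fin d) : ℕ := (x.t i).m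

/-- the coordinate `l_i(x)` -/
def lc (x : DL d q) (i : Fin d) : ℕ := (x.t i).l

/-- the height coordinate `h_i(x) = l_i(x) - m_i(x)` -/
def hc (x : DL d q) (i : Fin d) : ℤ := (x.t i).h

/-- The Stein–Taback quantity `f_{σ,i}` (here `i` is 1-based, `2 ≤ i ≤ d`):
`f_{σ,i} = m_{σ(1)} + ⋯ + m_{σ(i)} + l_{σ(i)} + ⋯ + l_{σ(d)}` for `2 ≤ i ≤ d-1`,
and `f_{σ,d} = 2m_{σ(1)} + m_{σ(2)} + ⋯ + m_{σ(d)} + l_{σ(d)}`. -/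
def fST {d : ℕ} (m l : Fin d → ℕ) (σ : Equiv.Perm (Fin d)) (i : ℕ) : ℕ :=
  if i = d then
    (∑ j, m (σ j)) + (∑ j ∈ univ.filter fun j : Fin d => (j : ℕ) = 0, m (σ j))
      + (∑ j ∈ univ.filter fun j : Fin d => (j : ℕ) = d - 1, l (σ j))
  else
    (∑ j ∈ univ.filter fun j : Fin d => (j : ℕ) + 1 ≤ i, m (σ j))
      + (∑ j ∈ univ.filter fun j : Fin d => i ≤ (j : ℕ) + 1, l (σ j))

/-- The distance on `DL_d(q)`, via the Stein–Taback formula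
`d(x,y) = min_{σ ∈ Σ_d} max_{2 ≤ i ≤ d} f_{σ,i}(x,y)`. -/
noncomputable def dist (x y : DL d q) : ℕ :=
  ⨅ σ : Equiv.Perm (Fin d), ⨆ i ∈ Finset.Icc 2 d, fST (mm x y) (ll x y) σ i

end DL

/-- Let `x, z` be vertices of `DL_d(q)` with `h_i(z) = 0` for all
`i`.  If `m_i(z) ≤ m_i(x)` for every `i`, then `d(x,z) ≤ d(x, id)`. -/
lemma cpl_nil_right {q : ℕ} (w : List (Fin q)) : TreeVertex.cpl w ([] : List (Fin q)) = 0 := by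
  cases w <;> rfl

lemma cpl_nil_left {q : ℕ} (w : List (Fin q)) : TreeVertex.cpl ([] : List (Fin q)) w = 0 := by
  cases w <;> rfl

lemma mPair_o_right {q : ℕ} (v : TreeVertex q) :
    TreeVertex.mPair v (TreeVertex.o q) = v.l := by
  unfold TreeVertex.mPair TreeVertex.o
  simp [cpl_nil_right]

lemma mPair_o_left {q : ℕ} (v : TreeVertex q) :
    TreeVertex.mPair (TreeVertex.o q) v = v.m := by
  unfold TreeVertex.mPair TreeVertex.o TreeVertex.l
  simp only [cpl_nil_left]
  split
  · simp
  · next h =>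
    have : v.m = 0 := by omega
    simp [this]

lemma fST_mono {d : ℕ} {m m' l l' : Fin d → ℕ} (hm : ∀ j, m j ≤ m' j)
    (hl : ∀ j, l j ≤ l' j) (σ : Equiv.Perm (Fin d)) (i : ℕ) :
    DL.fST m l σ i ≤ DL.fST m' l' σ i := by
  unfold DL.fST
  split <;> gcongr <;> first | exact hm _ | exact hl _

lemma nat_biSup_mono {s : Finset ℕ} {f g : ℕ → ℕ} (h : ∀ i ∈ s, f i ≤ g i) :
    ⨆ i ∈ s, f i ≤ ⨆ i ∈ s, g i := by
  have hbdd : ∀ (F : ℕ → ℕ), (∀ i, F i ≤ g i) →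
      BddAbove (Set.range fun i => ⨆ _ : i ∈ s, F i) := by
    intro F hF
    refine ⟨s.sup g, ?_⟩
    rintro _ ⟨i, rfl⟩
    dsimp only
    by_cases hi : i ∈ s
    · rw [ciSup_pos hi]
      exact le_trans (hF i) (Finset.le_sup hi)
    · simp only [hi]
      rw [ciSup_of_empty]
      exact Nat.zero_le _
  refine ciSup_mono (hbdd g fun i => le_refl _) fun i => ?_
  by_cases hi : i ∈ s
  · rw [ciSup_pos hi, ciSup_pos hi]; exact h i hi
  · simp only [hi]; rw [ciSup_of_empty]; exact Nat.zero_le _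

theorem dist_le_dist_id {d q : ℕ} (hd : 2 ≤ d) (x z : DL d q)
    (hz : ∀ i, DL.hc z i = 0)
    (hm : ∀ i, DL.mc z i ≤ DL.mc x i) :
    DL.dist x z ≤ DL.dist x (DL.id0 d q) := by
  have hzl : ∀ i, (z.t i).l = (z.t i).m := by
    intro i
    have := hz i
    unfold DL.hc TreeVertex.h at this
    omega
  have hmm : ∀ i, DL.mm x z i ≤ DL.mm x (DL.id0 d q) i := by
    intro i
    unfold DL.mm DL.id0
    simp only [mPair_o_right]
    unfold TreeVertex.mPair
    have := hm i
    unfold DL.mc at this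
    split
    · omega
    · split
      · exact le_refl _
      · exact Nat.sub_le _ _
  have hll : ∀ i, DL.ll x z i ≤ DL.ll x (DL.id0 d q) i := by
    intro i
    unfold DL.ll DL.id0
    simp only [mPair_o_left]
    unfold TreeVertex.mPair
    have h1 := hm i
    unfold DL.mc at h1
    have h2 := hzl i
    split
    · omega
    · split
      · omega
      · next h3 h4 =>
        calc (z.t i).l - TreeVertex.cpl (z.t i).w (x.t i).w ≤ (z.t i).l := Nat.sub_le _ _
          _ ≤ (x.t i).m := by omega
  unfold DL.dist
  refine ciInf_mono (OrderBot.bddBelow _) fun σ => ?_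
  exact nat_biSup_mono fun i _ => fST_mono hmm hll σ i
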